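/- Let Φ, Ψ, h, g and V_g be as in the canonical construction. Then V_g is closed under forward chaining in Φ (F_Φ(V_g) = V_g), the set X(V_g) := {C ∈ I(h) : Vars(C) ⊆ V_g} is an exclusive set of clauses of h, and g is the X(V_g)-component of h: for every set of clauses C ⊆ I(h) whose conjunction represents h, the conjunction of the clauses in C ∩ X(V_g) represents g. -/
import Mathlib


open Finset

/-- A clause, given by its (fin)sets of positive and negative variables. -/
structure Clause (V : Type*) where
  pos : Finset V
  neg : Finset V
deriving DecidableEq

namespace Clause

variable {V : Type*}

/-- A genuine clause: no variable occurs both positively and negatively. -/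
def IsClause (C : Clause V) : Prop := Disjoint C.pos C.neg

/-- Evaluation of a clause (as a disjunction of literals) under an assignment. -/
def eval (C : Clause V) (a : V → Bool) : Prop :=
  (∃ v ∈ C.pos, a v = true) ∨ (∃ v ∈ C.neg, a v = false)

/-- A pure (definite) Horn clause: exactly one positive literal, its head. -/
def IsPureHorn (C : Clause V) : Prop := ∃ v, C.pos = {v}

end Clause

variable {V : Type*}

/-- Conjunction (as a predicate on assignments) of a set of clauses. -/
def evalSet (S : Set (Clause V)) (a : V → Bool) : Prop := ∀ C ∈ S, C.eval a

/-- Conjunction of the clauses of a CNF, i.e. of a finite set of clauses. -/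
def evalCNF (Φ : Finset (Clause V)) (a : V → Bool) : Prop := ∀ C ∈ Φ, C.eval a

/-- A CNF represents a Boolean function `h`. -/
def Represents (Φ : Finset (Clause V)) (h : (V → Bool) → Prop) : Prop :=
  ∀ a, evalCNF Φ a ↔ h a

/-- A pure Horn CNF: all clauses are pure Horn. -/
def IsPureHornCNF (Φ : Finset (Clause V)) : Prop :=
  ∀ C ∈ Φ, C.IsClause ∧ C.IsPureHorn

/-- The forward chaining closure of a set `Q` of variables with respect to the
pure Horn CNF `Φ`: the smallest set containing `Q` such that whenever `Φ` contains
a clause `S → v` with `S` inside the set, also `v` belongs to it. -/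
def fcClosure (Φ : Finset (Clause V)) (Q : Set V) : Set V :=
  ⋂₀ {T : Set V | Q ⊆ T ∧ ∀ C ∈ Φ, ∀ v : V, C.pos = {v} → ↑C.neg ⊆ T → v ∈ T}

/-- `C` is an implicate of `h`: every assignment falsifying `C` falsifies `h`. -/
def Implicate (h : (V → Bool) → Prop) (C : Clause V) : Prop :=
  ∀ a, ¬ C.eval a → ¬ h a

/-- `C` is a prime implicate of `h`: an implicate from which no literal can be
deleted while remaining an implicate. -/
def PrimeImplicate [DecidableEq V] (h : (V → Bool) → Prop) (C : Clause V) : Prop :=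
  C.IsClause ∧ Implicate h C ∧
  (∀ v ∈ C.pos, ¬ Implicate h ⟨C.pos.erase v, C.neg⟩) ∧
  (∀ v ∈ C.neg, ¬ Implicate h ⟨C.pos, C.neg.erase v⟩)

/-- `C₁` and `C₂` are resolvable on `v`: `v` occurs positively in `C₁`, negatively in
`C₂`, and no other variable occurs with opposite signs in them. -/
def Resolvable (C₁ C₂ : Clause V) (v : V) : Prop :=
  v ∈ C₁.pos ∧ v ∈ C₂.neg ∧
  ∀ w, w ≠ v → ¬(w ∈ C₁.pos ∧ w ∈ C₂.neg) ∧ ¬(w ∈ C₁.neg ∧ w ∈ C₂.pos)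

/-- The resolvent `R(C₁,C₂) = (C₁ \ {v}) ∪ (C₂ \ {v̄})`. -/
def resolventOf [DecidableEq V] (C₁ C₂ : Clause V) (v : V) : Clause V :=
  ⟨C₁.pos.erase v ∪ C₂.pos, C₁.neg ∪ C₂.neg.erase v⟩

/-- A set of clauses closed under resolution. -/
def ResClosed [DecidableEq V] (S : Set (Clause V)) : Prop :=
  ∀ C₁ ∈ S, ∀ C₂ ∈ S, ∀ v, Resolvable C₁ C₂ v → resolventOf C₁ C₂ v ∈ S

/-- The resolution closure of a set of clauses. -/
def resClosure [DecidableEq V] (S : Set (Clause V)) : Set (Clause V) :=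
  ⋂₀ {T : Set (Clause V) | S ⊆ T ∧ ResClosed T}

/-- `I(h)`: the resolution closure of the set of prime implicates of `h`. -/
def implSet [DecidableEq V] (h : (V → Bool) → Prop) : Set (Clause V) :=
  resClosure {C | PrimeImplicate h C}

/-- An exclusive set of clauses of `h`. -/
def ExclusiveSet [DecidableEq V] (h : (V → Bool) → Prop) (Xs : Set (Clause V)) : Prop :=
  Xs ⊆ implSet h ∧
  ∀ C₁ ∈ implSet h, ∀ C₂ ∈ implSet h, ∀ v, Resolvable C₁ C₂ v →
    resolventOf C₁ C₂ v ∈ Xs → C₁ ∈ Xs ∧ C₂ ∈ Xs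

/-- The set of variables occurring in a CNF. -/
def varsOf [DecidableEq V] (Φ : Finset (Clause V)) : Finset V :=
  Φ.biUnion fun C => C.pos ∪ C.neg


/-- A Label Cover instance: a bipartite graph with parts `X` and `Y` and edge set `E`,
label sets `A` (for `X`-vertices) and `B` (for `Y`-vertices), and a nonempty
constraint relation `cst e ⊆ A × B` for every edge `e ∈ E`. -/
structure LabelCover (X Y A B : Type*) where
  E : Finset (X × Y)
  cst : X × Y → Finset (A × B)
  cst_nonempty : ∀ e ∈ E, (cst e).Nonempty

namespace LabelCover

variable {X Y A B : Type*}

/-- A labeling `(f, g)` covers an edge `(x,y)` if for every label `b ∈ g y` there is a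
label `a ∈ f x` with `(a, b)` admissible for the edge. -/
def Covers (I : LabelCover X Y A B) (f : X → Finset A) (g : Y → Finset B)
    (e : X × Y) : Prop :=
  ∀ b ∈ g e.2, ∃ a ∈ f e.1, (a, b) ∈ I.cst e

/-- A total-cover: a labeling (assigning a nonempty label set to every `Y`-vertex)
covering every edge. -/
def IsTotalCover (I : LabelCover X Y A B) (f : X → Finset A) (g : Y → Finset B) : Prop :=
  (∀ y, (g y).Nonempty) ∧ ∀ e ∈ I.E, I.Covers f g e

/-- A total-cover is tight if every `Y`-vertex receives exactly one label. -/
def Tight (g : Y → Finset B) : Prop := ∀ y, (g y).card = 1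

end LabelCover

/-- The cost of a labeling: the average number of labels assigned to `X`-vertices. -/
def lcCost {X A : Type*} [Fintype X] (f : X → Finset A) : ℚ :=
  (∑ x, ((f x).card : ℚ)) / (Fintype.card X : ℚ)


/-- The labels of the refined Label Cover instance: `L ∪ L′`, where `L = ⋃_x L_x`
with `L_x = {x} × A` and `L′ = ⋃_y L′_y` with `L′_y = {y} × B`. -/
abbrev Lab (X Y A B : Type*) := (X × A) ⊕ (Y × B)

/-- The propositional variables of the canonical pure Horn CNF construction:
`u ℓ` for labels `ℓ ∈ L ∪ L′`, `e x y i` and `el x y ℓ′ i` for edges `(x,y)`,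
labels `ℓ′ ∈ L′_y` and indices `i ∈ [d]`, and `v j` for `j ∈ [t]`. -/
inductive PV (X Y A B : Type*) where
  | u : Lab X Y A B → PV X Y A B
  | e : X → Y → ℕ → PV X Y A B
  | el : X → Y → B → ℕ → PV X Y A B
  | v : ℕ → PV X Y A B
deriving DecidableEq

section Canonical

variable {X Y A B : Type*} [Fintype X] [Fintype Y] [Fintype A] [Fintype B]
  [DecidableEq X] [DecidableEq Y] [DecidableEq A] [DecidableEq B]

/-- The (open) neighborhood `N(y) = {z ∈ X : (z,y) ∈ E}`. -/
def Nbr (I : LabelCover X Y A B) (y : Y) : Finset X :=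
  Finset.univ.filter fun z => (z, y) ∈ I.E

/-- Clauses (a): `u(ℓ) ∧ u(ℓ′) → e(x,y,ℓ′,i)` for `(x,y) ∈ E`, `(ℓ,ℓ′) ∈ Π_{(x,y)}`,
`i ∈ [d]`. -/
def clA (I : LabelCover X Y A B) (d : ℕ) : Finset (Clause (PV X Y A B)) :=
  (I.E ×ˢ Finset.Icc 1 d).biUnion fun p =>
    (I.cst p.1).image fun ab =>
      ⟨{PV.el p.1.1 p.1.2 ab.2 p.2},
       {PV.u (Sum.inl (p.1.1, ab.1)), PV.u (Sum.inr (p.1.2, ab.2))}⟩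

/-- Clauses (b): `⋀_{z ∈ N(y)} e(z,y,ℓ′,i) → e(x,y,i)` for `(x,y) ∈ E`, `ℓ′ ∈ L′_y`,
`i ∈ [d]`. -/
def clB (I : LabelCover X Y A B) (d : ℕ) : Finset (Clause (PV X Y A B)) :=
  ((I.E ×ˢ (Finset.univ : Finset B)) ×ˢ Finset.Icc 1 d).image fun p =>
    ⟨{PV.e p.1.1.1 p.1.1.2 p.2},
     (Nbr I p.1.1.2).image fun z => PV.el z p.1.1.2 p.1.2 p.2⟩

/-- Clauses (c): `e(x,y,i) → e(x,y,ℓ′,i)` for `(x,y) ∈ E`, `ℓ′ ∈ L′_y`, `i ∈ [d]`. -/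
def clC (I : LabelCover X Y A B) (d : ℕ) : Finset (Clause (PV X Y A B)) :=
  ((I.E ×ˢ (Finset.univ : Finset B)) ×ˢ Finset.Icc 1 d).image fun p =>
    ⟨{PV.el p.1.1.1 p.1.1.2 p.1.2 p.2}, {PV.e p.1.1.1 p.1.1.2 p.2}⟩

/-- The common body of the clauses (d): all variables `e(x,y,i)`, `(x,y) ∈ E`, `i ∈ [d]`. -/
def bigBody (I : LabelCover X Y A B) (d : ℕ) : Finset (PV X Y A B) :=
  (I.E ×ˢ Finset.Icc 1 d).image fun p => PV.e p.1.1 p.1.2 p.2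

/-- Clauses (d): `⋀_{i ∈ [d]} ⋀_{(x,y) ∈ E} e(x,y,i) → u(ℓ)` for `ℓ ∈ L ∪ L′`. -/
def clD (I : LabelCover X Y A B) (d : ℕ) : Finset (Clause (PV X Y A B)) :=
  (Finset.univ : Finset (Lab X Y A B)).image fun ℓ => ⟨{PV.u ℓ}, bigBody I d⟩

/-- Clauses (e): `v(j) → u(ℓ)` for `j ∈ [t]`, `ℓ ∈ L ∪ L′`. -/
def clE (X Y A B : Type*) [Fintype X] [Fintype Y] [Fintype A] [Fintype B]
    [DecidableEq X] [DecidableEq Y] [DecidableEq A] [DecidableEq B]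
    (t : ℕ) : Finset (Clause (PV X Y A B)) :=
  (Finset.Icc 1 t ×ˢ (Finset.univ : Finset (Lab X Y A B))).image fun p =>
    ⟨{PV.u p.2}, {PV.v p.1}⟩

/-- The canonical formula `Ψ`: clauses of types (a)–(d). -/
def PsiCNF (I : LabelCover X Y A B) (d : ℕ) : Finset (Clause (PV X Y A B)) :=
  clA I d ∪ clB I d ∪ clC I d ∪ clD I d

/-- The canonical formula `Φ`: clauses of types (a)–(e). -/
def PhiCNF (I : LabelCover X Y A B) (d t : ℕ) : Finset (Clause (PV X Y A B)) :=
  PsiCNF I d ∪ clE X Y A B t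

/-- The pure Horn function `h` represented by the canonical formula `Φ`. -/
def hFun (I : LabelCover X Y A B) (d t : ℕ) : (PV X Y A B → Bool) → Prop :=
  fun a => evalCNF (PhiCNF I d t) a

/-- The pure Horn function `g` represented by the canonical formula `Ψ`. -/
def gFun (I : LabelCover X Y A B) (d : ℕ) : (PV X Y A B → Bool) → Prop :=
  fun a => evalCNF (PsiCNF I d) a

end Canonical



set_option linter.unusedSectionVars false

section AuxGeneral

variable {W : Type*} [DecidableEq W]

lemma Clause.eval_congr (C : Clause W) {a a' : W → Bool}
    (h : ∀ w ∈ C.pos ∪ C.neg, a w = a' w) : C.eval a ↔ C.eval a' := by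
  unfold Clause.eval
  constructor <;> rintro (⟨v, hv, hav⟩ | ⟨v, hv, hav⟩)
  · exact Or.inl ⟨v, hv, (h v (Finset.mem_union_left _ hv)) ▸ hav⟩
  · exact Or.inr ⟨v, hv, (h v (Finset.mem_union_right _ hv)) ▸ hav⟩
  · exact Or.inl ⟨v, hv, (h v (Finset.mem_union_left _ hv)).symm ▸ hav⟩
  · exact Or.inr ⟨v, hv, (h v (Finset.mem_union_right _ hv)).symm ▸ hav⟩

lemma mem_varsOf' [DecidableEq W] {Φ : Finset (Clause W)} {C : Clause W} (hC : C ∈ Φ)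
    {w : W} (hw : w ∈ C.pos ∪ C.neg) : w ∈ varsOf Φ :=
  Finset.mem_biUnion.2 ⟨C, hC, hw⟩

lemma evalCNF_congr [DecidableEq W] (Φ : Finset (Clause W)) {a a' : W → Bool}
    (h : ∀ w ∈ varsOf Φ, a w = a' w) : evalCNF Φ a ↔ evalCNF Φ a' :=
  forall₂_congr fun C hC => C.eval_congr fun w hw => h w (mem_varsOf' hC hw)

lemma implicate_resolvent [DecidableEq W] {h : (W → Bool) → Prop} {C₁ C₂ : Clause W}
    (h1 : Implicate h C₁) (h2 : Implicate h C₂) (v : W) :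
    Implicate h (resolventOf C₁ C₂ v) := by
  intro a ha
  by_cases hv : a v = true
  · refine h2 a fun he => ha ?_
    rcases he with ⟨w, hw, hw'⟩ | ⟨w, hw, hw'⟩
    · exact Or.inl ⟨w, Finset.mem_union_right _ hw, hw'⟩
    · by_cases hwv : w = v
      · subst hwv; rw [hw'] at hv; exact absurd hv (by simp)
      · exact Or.inr ⟨w, Finset.mem_union_right _ (Finset.mem_erase.2 ⟨hwv, hw⟩), hw'⟩
  · refine h1 a fun he => ha ?_
    rcases he with ⟨w, hw, hw'⟩ | ⟨w, hw, hw'⟩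
    · by_cases hwv : w = v
      · subst hwv; exact absurd hw' hv
      · exact Or.inl ⟨w, Finset.mem_union_left _ (Finset.mem_erase.2 ⟨hwv, hw⟩), hw'⟩
    · exact Or.inr ⟨w, Finset.mem_union_left _ hw, hw'⟩

lemma implSet_subset [DecidableEq W] {h : (W → Bool) → Prop} {T : Set (Clause W)}
    (hp : {C | PrimeImplicate h C} ⊆ T) (hr : ResClosed T) : implSet h ⊆ T :=
  Set.sInter_subset_of_mem ⟨hp, hr⟩

lemma implSet_implicate [DecidableEq W] {h : (W → Bool) → Prop} {C : Clause W}
    (hC : C ∈ implSet h) : Implicate h C := by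
  refine implSet_subset (T := {C | Implicate h C}) (fun C hC => hC.2.1) ?_ hC
  intro C₁ h1 C₂ h2 v _
  exact implicate_resolvent h1 h2 v

end AuxGeneral

section AuxCanon

variable {X Y A B : Type*} [Fintype X] [Fintype Y] [Fintype A] [Fintype B]
  [DecidableEq X] [DecidableEq Y] [DecidableEq A] [DecidableEq B]

lemma v_not_mem_varsPsi (I : LabelCover X Y A B) (d : ℕ) (j : ℕ) :
    PV.v j ∉ varsOf (PsiCNF I d) := by
  intro hmem
  simp only [varsOf, PsiCNF, clA, clB, clC, clD, bigBody, Nbr, Finset.mem_biUnion,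
    Finset.mem_union, Finset.mem_image, Finset.mem_product] at hmem
  obtain ⟨C, hC, hw⟩ := hmem
  rcases hC with ((⟨p, hp, ab, hab, rfl⟩ | ⟨p, hp, rfl⟩) | ⟨p, hp, rfl⟩) | ⟨ℓ, hℓ, rfl⟩ <;>
    simp_all

lemma v_not_pos_Phi (I : LabelCover X Y A B) (d t : ℕ) {C : Clause (PV X Y A B)}
    (hC : C ∈ PhiCNF I d t) (j : ℕ) : PV.v j ∉ C.pos := by
  intro hmem
  simp only [PhiCNF, PsiCNF, clA, clB, clC, clD, clE, Finset.mem_union, Finset.mem_biUnion,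
    Finset.mem_image] at hC
  rcases hC with (((⟨p, hp, ab, hab, rfl⟩ | ⟨p, hp, rfl⟩) | ⟨p, hp, rfl⟩) | ⟨ℓ, hℓ, rfl⟩) |
    ⟨p, hp, rfl⟩ <;> simp_all

lemma varsPhi_cases (I : LabelCover X Y A B) (d t : ℕ) {w : PV X Y A B}
    (hw : w ∈ varsOf (PhiCNF I d t)) : w ∈ varsOf (PsiCNF I d) ∨ ∃ j, w = PV.v j := by
  rw [varsOf, Finset.mem_biUnion] at hw
  obtain ⟨C, hC, hw⟩ := hw
  rw [PhiCNF, Finset.mem_union] at hC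
  rcases hC with hC | hC
  · exact Or.inl (mem_varsOf' hC hw)
  · simp only [clE, Finset.mem_image, Finset.mem_product] at hC
    obtain ⟨p, hp, rfl⟩ := hC
    rcases Finset.mem_union.1 hw with hw | hw <;> rw [Finset.mem_singleton] at hw <;> subst hw
    · left
      have hmem : (⟨{PV.u p.2}, bigBody I d⟩ : Clause (PV X Y A B)) ∈ PsiCNF I d := by
        rw [PsiCNF]
        refine Finset.mem_union_right _ ?_
        simp [clD]
      exact mem_varsOf' hmem (Finset.mem_union_left _ (Finset.mem_singleton_self _))
    · exact Or.inr ⟨p.1, rfl⟩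

/-- Flipping a `v j` variable to false preserves `hFun`. -/
lemma hFun_flip (I : LabelCover X Y A B) (d t : ℕ) (a : PV X Y A B → Bool) (j : ℕ)
    (ha : hFun I d t a) :
    hFun I d t (fun w => if w = PV.v j then false else a w) := by
  intro C hC
  have hvp := v_not_pos_Phi I d t hC j
  rcases ha C hC with ⟨w, hw, hw'⟩ | ⟨w, hw, hw'⟩
  · refine Or.inl ⟨w, hw, ?_⟩
    have : w ≠ PV.v j := fun h => hvp (h ▸ hw)
    simp [this, hw']
  · refine Or.inr ⟨w, hw, ?_⟩
    by_cases h : w = PV.v j <;> simp [h, hw']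

/-- The invariant satisfied by all clauses in `I(h)`. -/
def InvPH (I : LabelCover X Y A B) (d t : ℕ) (C : Clause (PV X Y A B)) : Prop :=
  (C.pos ∪ C.neg ⊆ varsOf (PhiCNF I d t)) ∧ ∀ j, PV.v j ∉ C.pos

lemma prime_inv (I : LabelCover X Y A B) (d t : ℕ) {C : Clause (PV X Y A B)}
    (hC : PrimeImplicate (hFun I d t) C) : InvPH I d t C := by
  obtain ⟨hcl, himp, hpmin, hnmin⟩ := hC
  constructor
  · intro w hw
    by_contra hnw
    rcases Finset.mem_union.1 hw with hwp | hwn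
    · refine hpmin w hwp ?_
      intro a ha
      set a' := fun x => if x = w then false else a x with ha'
      have hCa' : ¬ C.eval a' := by
        rintro (⟨u, hu, hu'⟩ | ⟨u, hu, hu'⟩)
        · have huw : u ≠ w := by
            intro h; subst h; simp [ha'] at hu'
          refine ha (Or.inl ⟨u, Finset.mem_erase.2 ⟨huw, hu⟩, ?_⟩)
          simpa [ha', huw] using hu'
        · have huw : u ≠ w := by
            intro h; subst h; exact (Finset.disjoint_left.1 hcl hwp) hu
          refine ha (Or.inr ⟨u, hu, ?_⟩)
          simpa [ha', huw] using hu'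
      intro hha
      refine himp a' hCa' ?_
      refine (evalCNF_congr _ ?_).1 hha
      intro x hx
      have : x ≠ w := fun h => hnw (h ▸ hx)
      simp [ha', this]
    · refine hnmin w hwn ?_
      intro a ha
      set a' := fun x => if x = w then true else a x with ha'
      have hCa' : ¬ C.eval a' := by
        rintro (⟨u, hu, hu'⟩ | ⟨u, hu, hu'⟩)
        · have huw : u ≠ w := by
            intro h; subst h; exact (Finset.disjoint_right.1 hcl hwn) hu
          refine ha (Or.inl ⟨u, hu, ?_⟩)
          simpa [ha', huw] using hu'
        · have huw : u ≠ w := by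
            intro h; subst h; simp [ha'] at hu'
          refine ha (Or.inr ⟨u, Finset.mem_erase.2 ⟨huw, hu⟩, ?_⟩)
          simpa [ha', huw] using hu'
      intro hha
      refine himp a' hCa' ?_
      refine (evalCNF_congr _ ?_).1 hha
      intro x hx
      have : x ≠ w := fun h => hnw (h ▸ hx)
      simp [ha', this]
  · intro j hj
    refine hpmin (PV.v j) hj ?_
    intro a ha
    set a' := fun x => if x = PV.v j then false else a x with ha'
    have hCa' : ¬ C.eval a' := by
      rintro (⟨u, hu, hu'⟩ | ⟨u, hu, hu'⟩)
      · have huw : u ≠ PV.v j := by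
          intro h; subst h; simp [ha'] at hu'
        refine ha (Or.inl ⟨u, Finset.mem_erase.2 ⟨huw, hu⟩, ?_⟩)
        simpa [ha', huw] using hu'
      · have huw : u ≠ PV.v j := by
          intro h; subst h; exact (Finset.disjoint_left.1 hcl hj) hu
        refine ha (Or.inr ⟨u, hu, ?_⟩)
        simpa [ha', huw] using hu'
    intro hha
    exact himp a' hCa' (hFun_flip I d t a j hha)

lemma implSet_inv (I : LabelCover X Y A B) (d t : ℕ) {C : Clause (PV X Y A B)}
    (hC : C ∈ implSet (hFun I d t)) : InvPH I d t C := by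
  refine implSet_subset (T := {C | InvPH I d t C}) (fun C hC => prime_inv I d t hC) ?_ hC
  rintro C₁ ⟨h1s, h1v⟩ C₂ ⟨h2s, h2v⟩ v hres
  constructor
  · intro w hw
    simp only [resolventOf, Finset.mem_union, Finset.mem_erase] at hw
    rcases hw with (⟨_, hw⟩ | hw) | (hw | ⟨_, hw⟩)
    · exact h1s (Finset.mem_union_left _ hw)
    · exact h2s (Finset.mem_union_left _ hw)
    · exact h1s (Finset.mem_union_right _ hw)
    · exact h2s (Finset.mem_union_right _ hw)
  · intro j hj
    simp only [resolventOf, Finset.mem_union, Finset.mem_erase] at hj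
    rcases hj with ⟨_, hj⟩ | hj
    · exact h1v j hj
    · exact h2v j hj

/-- Any clause in `I(h)` with a positive variable outside `V_g` is impossible;
more precisely every positive variable lies in `varsOf Ψ`. -/
lemma implSet_pos_subset (I : LabelCover X Y A B) (d t : ℕ) {C : Clause (PV X Y A B)}
    (hC : C ∈ implSet (hFun I d t)) : C.pos ⊆ varsOf (PsiCNF I d) := by
  obtain ⟨hsub, hvpos⟩ := implSet_inv I d t hC
  intro w hw
  rcases varsPhi_cases I d t (hsub (Finset.mem_union_left _ hw)) with h | ⟨j, rfl⟩
  · exact h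
  · exact absurd hw (hvpos j)

end AuxCanon
/-- In the canonical construction, the variable set `V_g` of `Ψ` is
closed under forward chaining in `Φ`, the set `X(V_g) = {C ∈ I(h) : Vars(C) ⊆ V_g}`
is an exclusive set of clauses of `h`, and `g` is the `X(V_g)`-component of `h`:
for every set of clauses `𝒞 ⊆ I(h)` representing `h`, the set `𝒞 ∩ X(V_g)`
represents `g`. -/
theorem g_is_exclusive_component
    {X Y A B : Type*} [Fintype X] [Fintype Y] [Fintype A] [Fintype B]
    [DecidableEq X] [DecidableEq Y] [DecidableEq A] [DecidableEq B]
    [Nonempty X] [Nonempty Y]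
    (I : LabelCover X Y A B) (d t : ℕ) (hd : 1 ≤ d) (ht : 1 ≤ t)
    (hnoIsoX : ∀ x : X, ∃ y, (x, y) ∈ I.E)
    (hnoIsoY : ∀ y : Y, ∃ x, (x, y) ∈ I.E) :
    fcClosure (PhiCNF I d t) ↑(varsOf (PsiCNF I d)) = ↑(varsOf (PsiCNF I d)) ∧
    ExclusiveSet (hFun I d t)
      {C ∈ implSet (hFun I d t) |
        ↑(C.pos ∪ C.neg) ⊆ (↑(varsOf (PsiCNF I d)) : Set (PV X Y A B))} ∧
    ∀ 𝒞 : Set (Clause (PV X Y A B)), 𝒞 ⊆ implSet (hFun I d t) →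
      (∀ a, evalSet 𝒞 a ↔ hFun I d t a) →
      ∀ a, evalSet (𝒞 ∩ {C | ↑(C.pos ∪ C.neg) ⊆
        (↑(varsOf (PsiCNF I d)) : Set (PV X Y A B))}) a ↔ gFun I d a := by
  refine ⟨?_, ?_, ?_⟩
  · -- Part 1: forward chaining closure
    apply subset_antisymm
    · refine Set.sInter_subset_of_mem ⟨subset_rfl, ?_⟩
      intro C hC v hpos hneg
      have hC' : C ∈ PsiCNF I d ∨ C ∈ clE X Y A B t := by
        simpa [PhiCNF] using hC
      rcases hC' with hC' | hC'
      · exact Finset.mem_coe.2 (mem_varsOf' hC'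
          (Finset.mem_union_left _ (hpos ▸ Finset.mem_singleton_self v)))
      · exfalso
        simp only [clE, Finset.mem_image, Finset.mem_product] at hC'
        obtain ⟨p, hp, rfl⟩ := hC'
        have : (PV.v p.1 : PV X Y A B) ∈ varsOf (PsiCNF I d) := by
          have := hneg (by simp : (PV.v p.1 : PV X Y A B) ∈
            (({PV.v p.1} : Finset (PV X Y A B)) : Set (PV X Y A B)))
          exact Finset.mem_coe.1 this
        exact v_not_mem_varsPsi I d p.1 this
    · intro x hx
      exact Set.mem_sInter.2 fun T hT => hT.1 hx
  · -- Part 2: exclusivity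
    constructor
    · intro C hC
      exact hC.1
    · intro C₁ h1 C₂ h2 v hres hresX
      obtain ⟨hRmem, hRX⟩ := hresX
      have hRsub : (resolventOf C₁ C₂ v).pos ∪ (resolventOf C₁ C₂ v).neg ⊆
          varsOf (PsiCNF I d) := Finset.coe_subset.1 hRX
      have hvV : v ∈ varsOf (PsiCNF I d) := implSet_pos_subset I d t h1 hres.1
      constructor
      · refine ⟨h1, Finset.coe_subset.2 ?_⟩
        intro w hw
        rcases Finset.mem_union.1 hw with hw | hw
        · by_cases hwv : w = v
          · exact hwv ▸ hvV
          · exact hRsub (Finset.mem_union_left _ (Finset.mem_union_left _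
              (Finset.mem_erase.2 ⟨hwv, hw⟩)))
        · exact hRsub (Finset.mem_union_right _ (Finset.mem_union_left _ hw))
      · refine ⟨h2, Finset.coe_subset.2 ?_⟩
        intro w hw
        rcases Finset.mem_union.1 hw with hw | hw
        · exact hRsub (Finset.mem_union_left _ (Finset.mem_union_right _ hw))
        · by_cases hwv : w = v
          · exact hwv ▸ hvV
          · exact hRsub (Finset.mem_union_right _ (Finset.mem_union_right _
              (Finset.mem_erase.2 ⟨hwv, hw⟩)))
  · -- Part 3: component
    intro 𝒞 h𝒞 hrep a
    classical
    set a' : PV X Y A B → Bool :=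
      fun w => if w ∈ varsOf (PsiCNF I d) then a w else false with ha'
    have hagree : ∀ w ∈ varsOf (PsiCNF I d), a w = a' w := by
      intro w hw; simp [ha', hw]
    have hclE : ∀ C ∈ clE X Y A B t, C.eval a' := by
      intro C hC
      simp only [clE, Finset.mem_image, Finset.mem_product] at hC
      obtain ⟨p, hp, rfl⟩ := hC
      refine Or.inr ⟨PV.v p.1, Finset.mem_singleton_self _, ?_⟩
      simp [ha', v_not_mem_varsPsi I d p.1]
    constructor
    · intro hev
      by_contra hg
      have hg' : ¬ evalCNF (PsiCNF I d) a' := fun h =>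
        hg ((evalCNF_congr _ hagree).2 h)
      have hh' : ¬ hFun I d t a' := fun h =>
        hg' fun C hC => h C (by simp [PhiCNF, hC])
      have hne : ¬ evalSet 𝒞 a' := fun h => hh' ((hrep a').1 h)
      rw [evalSet] at hne
      push_neg at hne
      obtain ⟨C, hCmem, hCev⟩ := hne
      have hpos : C.pos ⊆ varsOf (PsiCNF I d) := implSet_pos_subset I d t (h𝒞 hCmem)
      have hneg : C.neg ⊆ varsOf (PsiCNF I d) := by
        intro w hw
        by_contra hnw
        have : a' w = false := by simp [ha', hnw]
        exact hCev (Or.inr ⟨w, hw, this⟩)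
      have hsub : C.pos ∪ C.neg ⊆ varsOf (PsiCNF I d) := Finset.union_subset hpos hneg
      have hmem : C ∈ 𝒞 ∩ {C : Clause (PV X Y A B) | ↑(C.pos ∪ C.neg) ⊆
          (↑(varsOf (PsiCNF I d)) : Set (PV X Y A B))} :=
        ⟨hCmem, Finset.coe_subset.2 hsub⟩
      exact hCev ((Clause.eval_congr C fun w hw => hagree w (hsub hw)).1 (hev C hmem))
    · rintro hg C ⟨hCmem, hCX⟩
      by_contra hCa
      have hsub : C.pos ∪ C.neg ⊆ varsOf (PsiCNF I d) := Finset.coe_subset.1 hCX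
      have hCa' : ¬ C.eval a' := fun h =>
        hCa ((Clause.eval_congr C fun w hw => hagree w (hsub hw)).2 h)
      refine implSet_implicate (h𝒞 hCmem) a' hCa' ?_
      intro D hD
      have hD' : D ∈ PsiCNF I d ∨ D ∈ clE X Y A B t := by simpa [PhiCNF] using hD
      rcases hD' with hD' | hD'
      · exact ((evalCNF_congr _ hagree).1 hg) D hD'
      · exact hclE D hD'
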